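/- Let n = m+p and let y_1,…,y_n be the n-th roots of (−1)^{p+1}. For a strictly increasing sequence K = (k_1 < ⋯ < k_p) of positive integers with ∑_j(k_j − j) = 0 and k_p < k_1 + n, define D(K) = ((−1)^{\binom{p}{2}}/n^p) ∑ (x_1⋯x_p)(x_1+⋯+x_p)^{∑_j k_j − j} det(x_j^{n−k_i}) det(x_i^{p−j}), the sum over all p-element subsets {x_1,…,x_p} ⊂ {y_1,…,y_n} taken in a fixed order. Then D(K) = 1 if K = (1,2,…,p) and D(K) = 0 otherwise. -/

import Mathlib

open Finset

/-- The function `D(K)` of formula (fnD):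
`D(K) = ((-1)^{C(p,2)}/n^p) ∑ (x_1⋯x_p)(x_1+⋯+x_p)^{∑_j k_j - j}
  det(x_j^{n-k_i}) det(x_i^{p-j})`,
the sum over all `p`-element subsets `{x_1, …, x_p}` of the roots `{y_1, …, y_n}`,
each taken in the fixed order (i.e. over strictly increasing selections). -/
noncomputable def Dfun (m p : ℕ) (y : Fin (m + p) → ℂ) (K : Fin p → ℤ) : ℂ :=
  ((-1 : ℂ) ^ Nat.choose p 2 / ((m + p : ℕ) : ℂ) ^ p) *
    ∑ c ∈ Finset.univ.filter (fun c : Fin p → Fin (m + p) =>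
        ∀ i j : Fin p, i < j → c i < c j),
      (∏ j : Fin p, y (c j)) *
        (∑ j : Fin p, y (c j)) ^ (∑ j : Fin p, (K j - ((j : ℕ) + 1))) *
        (Matrix.of fun i j : Fin p => y (c j) ^ (((m + p : ℕ) : ℤ) - K i)).det *
        (Matrix.of fun i j : Fin p => y (c i) ^ ((p : ℤ) - 1 - (j : ℕ))).det

namespace DfunAux

lemma sign_revPerm (p : ℕ) :
    Equiv.Perm.sign (Fin.revPerm : Equiv.Perm (Fin p)) = (-1 : ℤˣ) ^ (p.choose 2) := by
  induction p with
  | zero => simp [Subsingleton.elim (Fin.revPerm : Equiv.Perm (Fin 0)) 1]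
  | succ p ih =>
    have hdec : (Fin.revPerm : Equiv.Perm (Fin (p + 1))) =
        finRotate (p + 1) * (Equiv.permCongr finSuccEquivLast.symm
          (Equiv.optionCongr (Fin.revPerm : Equiv.Perm (Fin p)))) := by
      ext i
      refine Fin.lastCases ?_ (fun j => ?_) i
      · simp [finRotate_last, Fin.rev, Fin.ext_iff]
      · have h1 : (finSuccEquivLast.symm.permCongr
            (Equiv.optionCongr (Fin.revPerm : Equiv.Perm (Fin p)))) (Fin.castSucc j)
            = Fin.castSucc (Fin.rev j) := by
          simp [Equiv.permCongr_apply]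
        have hj : (j : ℕ) < p := j.2
        simp only [Equiv.Perm.coe_mul, Function.comp_apply, h1, finRotate_succ_apply,
          Fin.ext_iff, Fin.val_add, Fin.revPerm_apply, Fin.val_rev, Fin.coe_castSucc,
          Fin.val_one']
        have h0 : 1 % (p + 1) = 1 := Nat.mod_eq_of_lt (by omega)
        rw [h0, Nat.mod_eq_of_lt (by omega)]
        omega
    rw [hdec, map_mul, sign_finRotate, Equiv.Perm.sign_permCongr, Equiv.optionCongr_sign, ih,
      ← pow_add]
    congr 1
    rw [Nat.choose_succ_succ, Nat.choose_one_right, Nat.add_comm]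
    show p.choose 2 + (p + 1 - 1) = p + p.choose 2
    omega

variable {p n : ℕ} {R : Type*} [CommRing R]

/-- Expansion of `det (M * N)` by multilinearity over rows. -/
lemma det_mul_expand (M : Matrix (Fin p) (Fin n) R) (N : Matrix (Fin n) (Fin p) R) :
    (M * N).det = ∑ f : Fin p → Fin n, (∏ i, M i (f i)) * (N.submatrix f id).det := by
  have h1 : (M * N) = Matrix.of fun i => ∑ x, M i x • (fun j => N x j) := by
    ext i j
    simp [Matrix.mul_apply, Finset.sum_apply]
  rw [h1]
  have h2 := (Matrix.detRowAlternating :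
      (Fin p → R) [⋀^Fin p]→ₗ[R] R).toMultilinearMap.map_sum
      (fun i x => M i x • (fun j => N x j))
  rw [show ((Matrix.of fun i => ∑ x, M i x • (fun j => N x j)).det)
      = (Matrix.detRowAlternating : (Fin p → R) [⋀^Fin p]→ₗ[R] R).toMultilinearMap
        (fun i => ∑ x, M i x • (fun j => N x j)) from rfl, h2]
  refine Finset.sum_congr rfl fun f _ => ?_
  rw [show (fun i => M i (f i) • (fun j => N (f i) j)) =
      (fun i => M i (f i) • (fun j => (N.submatrix f id) i j)) from rfl]
  rw [MultilinearMap.map_smul_univ]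
  rfl

section decomp

variable {f : Fin p → Fin n}

lemma card_image_eq (hf : Function.Injective f) : (Finset.image f Finset.univ).card = p := by
  rw [Finset.card_image_of_injective _ hf, Finset.card_univ, Fintype.card_fin]

/-- The increasing enumeration of the image of an injective `f`. -/
noncomputable def monoOf (f : Fin p → Fin n) (hf : Function.Injective f) : Fin p → Fin n :=
  (Finset.image f Finset.univ).orderEmbOfFin (card_image_eq hf)

lemma monoOf_strictMono (hf : Function.Injective f) : StrictMono (monoOf f hf) :=
  ((Finset.image f Finset.univ).orderEmbOfFin (card_image_eq hf)).strictMono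

/-- The permutation relating `f` to its increasing rearrangement. -/
noncomputable def permOf (f : Fin p → Fin n) (hf : Function.Injective f) :
    Equiv.Perm (Fin p) :=
  Equiv.ofBijective
    (fun i => ((Finset.image f Finset.univ).orderIsoOfFin (card_image_eq hf)).symm
      ⟨f i, Finset.mem_image_of_mem f (Finset.mem_univ i)⟩)
    ((Finite.injective_iff_bijective).mp (fun a b hab => by
      apply hf
      have h2 := congrArg (((Finset.image f Finset.univ).orderIsoOfFin (card_image_eq hf))) hab
      simp only [OrderIso.apply_symm_apply] at h2
      exact Subtype.ext_iff.mp h2))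

lemma monoOf_comp_permOf (hf : Function.Injective f) :
    monoOf f hf ∘ permOf f hf = f := by
  funext i
  show monoOf f hf (((Finset.image f Finset.univ).orderIsoOfFin (card_image_eq hf)).symm
      ⟨f i, _⟩) = f i
  rw [monoOf, ← Finset.coe_orderIsoOfFin_apply, OrderIso.apply_symm_apply]

lemma monoOf_comp (c : Fin p → Fin n) (hc : StrictMono c) (σ : Equiv.Perm (Fin p))
    (hf : Function.Injective (c ∘ σ)) : monoOf (c ∘ σ) hf = c := by
  have himg : Finset.image (c ∘ σ) Finset.univ = Finset.image c Finset.univ := by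
    ext z
    simp only [Finset.mem_image, Finset.mem_univ, true_and, Function.comp_apply]
    exact ⟨fun ⟨i, hi⟩ => ⟨σ i, hi⟩, fun ⟨i, hi⟩ => ⟨σ.symm i, by simpa using hi⟩⟩
  have := Finset.orderEmbOfFin_unique
    (f := c) (show (Finset.image (c ∘ σ) Finset.univ).card = p from card_image_eq hf)
    (fun x => by rw [himg]; exact Finset.mem_image_of_mem c (Finset.mem_univ x)) hc
  rw [monoOf, ← this]

lemma permOf_comp (c : Fin p → Fin n) (hc : StrictMono c) (σ : Equiv.Perm (Fin p))
    (hf : Function.Injective (c ∘ σ)) : permOf (c ∘ σ) hf = σ := by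
  have hm := monoOf_comp c hc σ hf
  ext i
  have h1 : monoOf (c ∘ σ) hf (permOf (c ∘ σ) hf i) = (c ∘ σ) i :=
    congrFun (monoOf_comp_permOf hf) i
  rw [hm] at h1
  exact congrArg _ (hc.injective h1)

end decomp

lemma sum_injective_eq_sum_mono (F : (Fin p → Fin n) → R) :
    ∑ f ∈ Finset.univ.filter (fun f : Fin p → Fin n => Function.Injective f), F f
      = ∑ c ∈ Finset.univ.filter (fun c : Fin p → Fin n => StrictMono c),
          ∑ σ : Equiv.Perm (Fin p), F (c ∘ σ) := by
  rw [← Finset.sum_product']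
  rw [show (Finset.univ.filter (fun c : Fin p → Fin n => StrictMono c) ×ˢ
      (Finset.univ : Finset (Equiv.Perm (Fin p))))
      = Finset.filter (fun cs : (Fin p → Fin n) × Equiv.Perm (Fin p) => StrictMono cs.1)
          Finset.univ from by ext ⟨c, σ⟩; simp]
  refine Finset.sum_bij
    (i := fun f hf => (monoOf f (by simpa using hf), permOf f (by simpa using hf)))
    (fun f hf => by
      simp only [Finset.mem_filter, Finset.mem_univ, true_and]
      exact monoOf_strictMono _)
    (fun f₁ h₁ f₂ h₂ heq => by
      have e₁ := monoOf_comp_permOf (f := f₁) (by simpa using h₁)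
      have e₂ := monoOf_comp_permOf (f := f₂) (by simpa using h₂)
      rw [← e₁, ← e₂]
      rw [Prod.mk.injEq] at heq
      rw [heq.1, heq.2])
    (fun cs hcs => by
      have hc : StrictMono cs.1 := by simpa using hcs
      have hf : Function.Injective (cs.1 ∘ cs.2) :=
        hc.injective.comp cs.2.injective
      refine ⟨cs.1 ∘ cs.2, by simpa using hf, ?_⟩
      have h1 := monoOf_comp cs.1 hc cs.2 hf
      have h2 := permOf_comp cs.1 hc cs.2 hf
      rw [Prod.ext_iff]
      exact ⟨h1, h2⟩)
    (fun f hf => by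
      conv_lhs => rw [← monoOf_comp_permOf (f := f) (by simpa using hf)])

/-- **Cauchy–Binet formula**. -/
lemma cauchy_binet (M : Matrix (Fin p) (Fin n) R) (N : Matrix (Fin n) (Fin p) R) :
    (M * N).det = ∑ c ∈ Finset.univ.filter (fun c : Fin p → Fin n => StrictMono c),
      (M.submatrix id c).det * (N.submatrix c id).det := by
  rw [det_mul_expand]
  rw [← Finset.sum_filter_add_sum_filter_not Finset.univ
    (fun f : Fin p → Fin n => Function.Injective f)]
  have hzero : ∑ f ∈ Finset.univ.filter
      (fun f : Fin p → Fin n => ¬ Function.Injective f),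
      (∏ i, M i (f i)) * (N.submatrix f id).det = 0 := by
    refine Finset.sum_eq_zero fun f hf => ?_
    have : ¬ Function.Injective f := by simpa using hf
    rw [Function.not_injective_iff] at this
    obtain ⟨a, b, hab, hne⟩ := this
    rw [Matrix.det_zero_of_row_eq hne (by ext j; simp [hab]), mul_zero]
  rw [hzero, add_zero, sum_injective_eq_sum_mono]
  refine Finset.sum_congr rfl fun c hc => ?_
  have hc' : StrictMono c := by simpa using hc
  have hrow : ∀ σ : Equiv.Perm (Fin p),
      (N.submatrix (c ∘ σ) id).det = Equiv.Perm.sign σ * (N.submatrix c id).det := by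
    intro σ
    rw [show N.submatrix (c ∘ σ) id = (N.submatrix c id).submatrix σ id from rfl,
      Matrix.det_permute]
  have hdet : (M.submatrix id c).det
      = ∑ σ : Equiv.Perm (Fin p), (Equiv.Perm.sign σ : R) * ∏ i, M i (c (σ i)) := by
    rw [← Matrix.det_transpose, Matrix.det_apply']
    refine Finset.sum_congr rfl fun σ _ => ?_
    simp [Matrix.transpose_apply]
  rw [hdet, Finset.sum_mul]
  refine Finset.sum_congr rfl fun σ _ => ?_
  rw [hrow σ]
  simp only [Function.comp_apply]
  ring

lemma psum_not_dvd {n : ℕ} (hn : 0 < n) (c : ℂ) (hc : c ≠ 0)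
    (y : Fin n → ℂ) (hinj : Function.Injective y) (hroot : ∀ i, y i ^ n = c)
    {e : ℕ} (he : ¬ (n : ℕ) ∣ e) : ∑ x : Fin n, y x ^ e = 0 := by
  classical
  set R : Finset ℂ := Finset.univ.image y with hR
  have hcardR : R.card = n := by
    rw [hR, Finset.card_image_of_injective _ hinj, Finset.card_univ, Fintype.card_fin]
  have hRroots : ∀ z ∈ R, z ^ n = c := by
    intro z hz
    obtain ⟨x, -, rfl⟩ := Finset.mem_image.mp hz
    exact hroot x
  -- R is the full set of n-th roots of c
  have hT : R = (Polynomial.nthRoots n (c : ℂ)).toFinset := by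
    apply Finset.eq_of_subset_of_card_le
    · intro z hz
      rw [Multiset.mem_toFinset, Polynomial.mem_nthRoots hn]
      exact hRroots z hz
    · calc (Polynomial.nthRoots n (c : ℂ)).toFinset.card
          ≤ Multiset.card (Polynomial.nthRoots n (c : ℂ)) := Multiset.toFinset_card_le _
        _ ≤ n := Polynomial.card_nthRoots n c
        _ = R.card := hcardR.symm
  obtain ⟨u, hu⟩ : ∃ u : ℂ, IsPrimitiveRoot u n :=
    ⟨_, Complex.isPrimitiveRoot_exp n hn.ne'⟩
  have hmem : ∀ z ∈ R, u * z ∈ R := by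
    intro z hz
    rw [hT, Multiset.mem_toFinset, Polynomial.mem_nthRoots hn, mul_pow, hu.pow_eq_one, one_mul]
    exact hRroots z hz
  have hu0 : u ≠ 0 := hu.ne_zero hn.ne'
  have humul : Function.Injective (fun z : ℂ => u * z) :=
    fun a b h => mul_left_cancel₀ hu0 h
  have himg : R.image (fun z => u * z) = R :=
    Finset.eq_of_subset_of_card_le (fun z hz => by
      obtain ⟨w, hw, rfl⟩ := Finset.mem_image.mp hz; exact hmem w hw)
      (by rw [Finset.card_image_of_injective _ humul])
  have hS : ∑ x : Fin n, y x ^ e = ∑ z ∈ R, z ^ e := by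
    rw [hR, Finset.sum_image (fun a _ b _ h => hinj h)]
  have key : ∑ z ∈ R, z ^ e = u ^ e * ∑ z ∈ R, z ^ e := by
    conv_lhs => rw [← himg]
    rw [Finset.sum_image (fun a _ b _ h => humul h), Finset.mul_sum]
    exact Finset.sum_congr rfl fun z _ => by rw [mul_pow]
  have hue : u ^ e ≠ 1 := fun h => he (hu.pow_eq_one_iff_dvd e |>.mp h)
  have := sub_eq_zero.mpr key.symm
  rw [hS]
  have h2 : (u ^ e - 1) * ∑ z ∈ R, z ^ e = 0 := by linear_combination this
  rcases mul_eq_zero.mp h2 with h | h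
  · exact absurd (sub_eq_zero.mp h) hue
  · exact h

end DfunAux

/-- Let `n = m+p` and `y_1, …, y_n` be the `n`-th roots of `(-1)^{p+1}`.  For a
strictly increasing sequence `K = (k_1 < ⋯ < k_p)` of positive integers with
`∑_j (k_j - j) = 0` and `k_p < k_1 + n`, `D(K) = 1` if `K = (1,2,…,p)` and
`D(K) = 0` otherwise. -/
theorem Dfun_initial_values (m p : ℕ) (hm : 1 ≤ m) (hp : 0 < p)
    (y : Fin (m + p) → ℂ) (hinj : Function.Injective y)
    (hroot : ∀ i, y i ^ (m + p) = (-1 : ℂ) ^ (p + 1))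
    (K : Fin p → ℤ) (hmono : StrictMono K) (hpos : ∀ j, 1 ≤ K j)
    (hsum : ∑ j : Fin p, (K j - ((j : ℕ) + 1)) = 0)
    (hbound : K ⟨p - 1, by omega⟩ < K ⟨0, hp⟩ + (m + p)) :
    Dfun m p y K = if ∀ j : Fin p, K j = (j : ℕ) + 1 then 1 else 0 := by
  classical
  -- Step 1: the hypotheses force `K j = j + 1`.
  have hstep : ∀ k : ℕ, ∀ hk : k < p, (k : ℤ) + 1 ≤ K ⟨k, hk⟩ := by
    intro k
    induction k with
    | zero => intro hk; simpa using hpos ⟨0, hk⟩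
    | succ k ih =>
      intro hk
      have h1 := ih (by omega)
      have h2 : K ⟨k, by omega⟩ < K ⟨k + 1, hk⟩ := hmono (by simp [Fin.lt_iff_val_lt_val])
      push_cast at h1 ⊢
      omega
  have hK : ∀ j : Fin p, K j = (j : ℕ) + 1 := by
    have hzero := (Finset.sum_eq_zero_iff_of_nonneg (fun j _ => by
      have := hstep j.1 j.2
      simp only [Fin.eta] at this
      omega)).mp hsum
    intro j
    have := hzero j (Finset.mem_univ j)
    omega
  rw [if_pos hK]
  -- notation
  set c : ℂ := (-1 : ℂ) ^ (p + 1) with hc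
  have hc0 : c ≠ 0 := pow_ne_zero _ (by norm_num)
  have hn0 : ((m + p : ℕ) : ℂ) ≠ 0 := Nat.cast_ne_zero.mpr (by omega)
  set M : Matrix (Fin p) (Fin (m + p)) ℂ :=
    Matrix.of fun i x => y x ^ (m + p - 1 - (i : ℕ)) with hM
  set N : Matrix (Fin (m + p)) (Fin p) ℂ :=
    Matrix.of fun x j => y x ^ (p - (j : ℕ)) with hN
  -- Step 2: rewrite `Dfun` as a Cauchy–Binet sum.
  have hfilter : (Finset.univ.filter (fun c : Fin p → Fin (m + p) =>
      ∀ i j : Fin p, i < j → c i < c j))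
      = Finset.univ.filter (fun c : Fin p → Fin (m + p) => StrictMono c) := by
    ext g
    simp only [Finset.mem_filter, Finset.mem_univ, true_and]
    exact ⟨fun h => fun a b hab => h a b hab, fun h a b hab => h hab⟩
  have hsummand : ∀ g ∈ Finset.univ.filter
      (fun g : Fin p → Fin (m + p) => StrictMono g),
      (∏ j : Fin p, y (g j)) *
        (∑ j : Fin p, y (g j)) ^ (∑ j : Fin p, (K j - ((j : ℕ) + 1))) *
        (Matrix.of fun i j : Fin p => y (g j) ^ (((m + p : ℕ) : ℤ) - K i)).det *
        (Matrix.of fun i j : Fin p => y (g i) ^ ((p : ℤ) - 1 - (j : ℕ))).det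
      = (M.submatrix id g).det * (N.submatrix g id).det := by
    intro g _
    rw [hsum, zpow_zero, mul_one]
    have hd1 : (Matrix.of fun i j : Fin p => y (g j) ^ (((m + p : ℕ) : ℤ) - K i)).det
        = (M.submatrix id g).det := by
      congr 1
      ext i j
      simp only [Matrix.of_apply, Matrix.submatrix_apply, id_eq]
      rw [hK i]
      have hi := i.2
      rw [show ((m + p : ℕ) : ℤ) - ((i : ℕ) + 1) = ((m + p - 1 - (i : ℕ) : ℕ) : ℤ) by omega,
        zpow_natCast]
      rfl
    have hd2 : (∏ j : Fin p, y (g j)) *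
        (Matrix.of fun i j : Fin p => y (g i) ^ ((p : ℤ) - 1 - (j : ℕ))).det
        = (N.submatrix g id).det := by
      have he : (Matrix.of fun i j : Fin p => y (g i) ^ ((p : ℤ) - 1 - (j : ℕ)))
          = Matrix.of fun i j : Fin p => y (g i) ^ ((p - 1 - (j : ℕ) : ℕ)) := by
        ext i j
        have hj := j.2
        simp only [Matrix.of_apply]
        rw [show (p : ℤ) - 1 - (j : ℕ) = ((p - 1 - (j : ℕ) : ℕ) : ℤ) by omega, zpow_natCast]
      rw [he]
      have := Matrix.det_mul_column (fun i : Fin p => y (g i))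
        (Matrix.of fun i j : Fin p => y (g i) ^ ((p - 1 - (j : ℕ) : ℕ)))
      rw [← this]
      congr 1
      ext i j
      have hj := j.2
      show y (g i) * y (g i) ^ (p - 1 - (j : ℕ)) = y (g i) ^ (p - (j : ℕ))
      rw [← pow_succ']
      congr 1
      omega
    rw [hd1, mul_right_comm, hd2, mul_comm]
  have hDfun : Dfun m p y K
      = ((-1 : ℂ) ^ Nat.choose p 2 / ((m + p : ℕ) : ℂ) ^ p) * (M * N).det := by
    rw [Dfun, hfilter, Finset.sum_congr rfl hsummand, ← DfunAux.cauchy_binet]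
  -- Step 3: compute the product matrix.
  have hprod : M * N = (((m + p : ℕ) : ℂ) * c) •
      ((1 : Matrix (Fin p) (Fin p) ℂ).submatrix id ⇑(Fin.revPerm : Equiv.Perm (Fin p))) := by
    ext i j
    have hi := i.2
    have hj := j.2
    rw [Matrix.mul_apply]
    have hterm : ∀ x : Fin (m + p), M i x * N x j
        = y x ^ ((m + p - 1 - (i : ℕ)) + (p - (j : ℕ))) := by
      intro x
      rw [pow_add]
      rfl
    rw [Finset.sum_congr rfl fun x _ => hterm x]
    by_cases hij : (i : ℕ) + (j : ℕ) = p - 1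
    · have he : (m + p - 1 - (i : ℕ)) + (p - (j : ℕ)) = m + p := by omega
      rw [he]
      rw [Finset.sum_congr rfl fun x _ => hroot x]
      simp only [Finset.sum_const, Finset.card_univ, Fintype.card_fin, nsmul_eq_mul]
      have hij' : i = Fin.revPerm j := by
        apply Fin.ext
        simp only [Fin.revPerm_apply, Fin.val_rev]
        omega
      simp [Matrix.smul_apply, Matrix.submatrix_apply, Matrix.one_apply, hij', hc]
    · have hnd : ¬ (m + p) ∣ ((m + p - 1 - (i : ℕ)) + (p - (j : ℕ))) := by
        intro hdvd
        rcases hdvd with ⟨k, hk⟩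
        rcases (by omega : k = 0 ∨ k = 1 ∨ 2 ≤ k) with rfl | rfl | h2
        · omega
        · omega
        · have h3 : (m + p) * 2 ≤ (m + p) * k := mul_le_mul_right h2 (m + p)
          omega
      rw [DfunAux.psum_not_dvd (by omega) c hc0 y hinj hroot hnd]
      have hij' : i ≠ Fin.rev j := by
        intro h
        rw [Fin.ext_iff, Fin.val_rev] at h
        omega
      simp [Matrix.smul_apply, Matrix.submatrix_apply, Matrix.one_apply, hij']
  -- Step 4: compute the determinant.
  have hsign : ((Equiv.Perm.sign (Fin.revPerm : Equiv.Perm (Fin p)) : ℤ) : ℂ)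
      = (-1 : ℂ) ^ (p.choose 2) := by
    rw [DfunAux.sign_revPerm]
    push_cast
    rfl
  have hdet : (M * N).det = (((m + p : ℕ) : ℂ) * c) ^ p * (-1 : ℂ) ^ (p.choose 2) := by
    rw [hprod, Matrix.det_smul, Matrix.det_permute', Matrix.det_one, Fintype.card_fin]
    rw [hsign]
    ring
  have heven : (-1 : ℂ) ^ ((p + 1) * p) = 1 :=
    Even.neg_one_pow (by rw [mul_comm]; exact Nat.even_mul_succ_self p)
  have h1 : (((m + p : ℕ) : ℂ) * c) ^ p = ((m + p : ℕ) : ℂ) ^ p := by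
    rw [mul_pow, hc, ← pow_mul, heven, mul_one]
  have h2 : (-1 : ℂ) ^ p.choose 2 * (-1 : ℂ) ^ p.choose 2 = 1 := by
    rw [← pow_add, ← two_mul, pow_mul]
    norm_num
  have h3 : (-1 : ℂ) ^ p.choose 2 * ((((m + p : ℕ) : ℂ)) ^ p * (-1 : ℂ) ^ p.choose 2)
      = ((m + p : ℕ) : ℂ) ^ p * ((-1 : ℂ) ^ p.choose 2 * (-1 : ℂ) ^ p.choose 2) := by
    ring
  rw [hDfun, hdet, h1, div_mul_eq_mul_div, h3, h2, mul_one, div_self (pow_ne_zero p hn0)]
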